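/- Let γ : (a,b) → ℝⁿ be a regular curve with γ(t) → 0 as t → b, reparametrized by arc length as γ̄ : (a,c) → ℝⁿ. If the limit of the unit tangent γ̄'(τ) exists as τ → c, then c < ∞; i.e., the curve has finite arc length up to the collision. -/

import Mathlib

open Filter Set

/-- The filter of approach to `c` from the left, allowing `c = ∞`. -/
noncomputable def leftApproach (c : EReal) : Filter ℝ :=
  if c = ⊤ then Filter.atTop else nhdsWithin c.toReal (Set.Iio c.toReal)

theorem stmt_3 {n : ℕ} (a : ℝ) (c : EReal) (hac : (a : EReal) < c)
    (γ dγ : ℝ → EuclideanSpace ℝ (Fin n))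
    (hdiff : ∀ τ : ℝ, a < τ → (τ : EReal) < c → HasDerivAt γ (dγ τ) τ)
    (harc : ∀ τ : ℝ, a < τ → (τ : EReal) < c → ‖dγ τ‖ = 1)
    (hγ0 : ∀ τ : ℝ, a < τ → (τ : EReal) < c → γ τ ≠ 0)
    (hcoll : Tendsto γ (leftApproach c ⊓ Filter.principal (Set.Ioi a)) (nhds 0))
    (v : EuclideanSpace ℝ (Fin n))
    (htang : Tendsto dγ (leftApproach c ⊓ Filter.principal (Set.Ioi a)) (nhds v)) :
    c < ⊤ := by
  by_contra hc
  have hctop : c = ⊤ := top_le_iff.mp (not_lt.mp hc)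
  subst hctop
  have hLA : leftApproach ⊤ = Filter.atTop := by simp [leftApproach]
  have hfilt : leftApproach (⊤ : EReal) ⊓ Filter.principal (Set.Ioi a) = Filter.atTop := by
    rw [hLA, inf_eq_left]
    exact le_principal_iff.mpr (Ioi_mem_atTop a)
  rw [hfilt] at hcoll htang
  have hlt : ∀ τ : ℝ, (τ : EReal) < ⊤ := fun τ => EReal.coe_lt_top τ
  -- ‖v‖ = 1
  have hnv : ‖v‖ = 1 := by
    have h1 : Tendsto (fun τ => ‖dγ τ‖) Filter.atTop (nhds ‖v‖) := htang.norm
    have h2 : Tendsto (fun τ => ‖dγ τ‖) Filter.atTop (nhds 1) := by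
      refine Tendsto.congr' ?_ tendsto_const_nhds
      filter_upwards [Ioi_mem_atTop a] with τ hτ
      exact (harc τ hτ (hlt τ)).symm
    exact tendsto_nhds_unique h1 h2
  -- f = inner v (γ τ)
  set f : ℝ → ℝ := fun τ => inner ℝ v (γ τ) with hf
  have hfderiv : ∀ τ : ℝ, a < τ → HasDerivAt f (inner ℝ v (dγ τ)) τ := by
    intro τ hτ
    have := (hasDerivAt_const τ v).inner ℝ (hdiff τ hτ (hlt τ))
    simpa using this
  -- f' tends to ⟪v,v⟫ = 1
  have hf' : Tendsto (fun τ => (inner ℝ v (dγ τ) : ℝ)) Filter.atTop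
      (nhds (inner ℝ v v : ℝ)) := (Continuous.inner continuous_const continuous_id).continuousAt.tendsto.comp htang
  have hvv : (inner ℝ v v : ℝ) = 1 := by
    rw [real_inner_self_eq_norm_sq, hnv]; norm_num
  rw [hvv] at hf'
  -- eventually f' ≥ 1/2
  obtain ⟨T₀, hT₀⟩ := (eventually_atTop.mp (hf'.eventually (eventually_ge_nhds (by norm_num : (1:ℝ)/2 < 1))))
  set T := max T₀ (a + 1) with hT
  have hTa : a < T := lt_of_lt_of_le (by linarith) (le_max_right _ _)
  have hge : ∀ τ ∈ Set.Ici T, (1:ℝ)/2 ≤ inner ℝ v (dγ τ) := by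
    intro τ hτ
    exact hT₀ τ (le_trans (le_max_left _ _) hτ)
  -- monotonicity of g = f - τ/2 on Ici T
  set g : ℝ → ℝ := fun τ => f τ - τ / 2 with hg
  have hgderiv : ∀ τ ∈ Set.Ici T, HasDerivAt g (inner ℝ v (dγ τ) - 1/2) τ := by
    intro τ hτ
    have hτa : a < τ := lt_of_lt_of_le hTa hτ
    exact ((hfderiv τ hτa).sub ((hasDerivAt_id τ).div_const 2))
  have hmono : MonotoneOn g (Set.Ici T) := by
    apply monotoneOn_of_deriv_nonneg (convex_Ici T)
    · exact fun x hx => (hgderiv x hx).continuousAt.continuousWithinAt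
    · intro x hx
      exact (hgderiv x (interior_subset hx)).differentiableAt.differentiableWithinAt
    · intro x hx
      rw [(hgderiv x (interior_subset hx)).deriv]
      have := hge x (interior_subset hx)
      linarith
  -- so f τ ≥ f T + (τ - T)/2, hence f → ∞
  have hbig : Tendsto f Filter.atTop Filter.atTop := by
    apply tendsto_atTop_mono' _ (_ : ∀ᶠ τ in Filter.atTop, f T + (τ - T)/2 ≤ f τ)
    · have : Tendsto (fun τ : ℝ => f T + (τ - T)/2) Filter.atTop Filter.atTop := by
        apply Filter.tendsto_atTop_add_const_left
        apply Tendsto.atTop_div_const (by norm_num)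
        exact tendsto_atTop_add_const_right _ _ tendsto_id
      exact this
    · filter_upwards [Ici_mem_atTop T] with τ hτ
      have := hmono (self_mem_Ici) hτ hτ
      simp only [hg] at this
      linarith
  have hsmall : Tendsto f Filter.atTop (nhds (inner ℝ v (0 : EuclideanSpace ℝ (Fin n)))) :=
    (Continuous.inner continuous_const continuous_id).continuousAt.tendsto.comp hcoll
  exact not_tendsto_atTop_of_tendsto_nhds hsmall hbig
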